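/- arXiv:1303.0238 — 3 statements merged into one kernel-verified Lean document; each statement's English description precedes it below -/
import Mathlib

section
/- Let $(V(n))_{n \geq 1}$ be positive real random variables with $n^{1/2} V(n) \to c > 0$ almost surely, and let $(\hat\lambda_n)_{n \geq 1}$ be random variables with $\hat\lambda_n \to \lambda > 0$ almost surely. Define $T(\epsilon) = \inf\{n \geq 1 : V(n) \leq \epsilon \hat\lambda_n\}$. Then almost surely $\epsilon\, T(\epsilon)^{1/2} \to c/\lambda$ as $\epsilon \to 0$. -/
open Filter MeasureTheory Set

theorem relative_sd_stopping_time_growth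
    (Ω : Type*) [MeasurableSpace Ω] (μ : Measure Ω) [IsProbabilityMeasure μ]
    (V : ℕ → Ω → ℝ) (c : ℝ) (hc : 0 < c) (hVpos : ∀ n ω, 0 < V n ω)
    (hconv : ∀ᵐ ω ∂μ, Tendsto (fun n : ℕ => Real.sqrt n * V n ω) atTop (nhds c))
    (lam : ℝ) (hlam : 0 < lam) (lamHat : ℕ → Ω → ℝ)
    (hlamHat : ∀ᵐ ω ∂μ, Tendsto (fun n => lamHat n ω) atTop (nhds lam))
    (T : ℝ → Ω → ℕ) (hT : ∀ ε ω, T ε ω = sInf {n : ℕ | 1 ≤ n ∧ V n ω ≤ ε * lamHat n ω}) :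
    ∀ᵐ ω ∂μ,
      Tendsto (fun ε => ε * Real.sqrt (T ε ω)) (nhdsWithin 0 (Set.Ioi 0))
        (nhds (c / lam)) := by
  filter_upwards [hconv, hlamHat] with ω h1 h2
  have hsq : Tendsto (fun n : ℕ => Real.sqrt n) atTop atTop := by
    apply tendsto_atTop_atTop.mpr
    intro b
    refine ⟨⌈b ^ 2⌉₊, fun n hn => ?_⟩
    have hb : b ^ 2 ≤ (n : ℝ) := le_trans (Nat.le_ceil _) (by exact_mod_cast hn)
    calc b ≤ |b| := le_abs_self b
      _ = Real.sqrt (b ^ 2) := (Real.sqrt_sq_eq_abs b).symm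
      _ ≤ Real.sqrt n := Real.sqrt_le_sqrt hb
  -- V n ω → 0
  have hV0 : Tendsto (fun n => V n ω) atTop (nhds 0) := by
    have h3 := h1.mul hsq.inv_tendsto_atTop
    rw [mul_zero] at h3
    refine h3.congr' ?_
    filter_upwards [eventually_ge_atTop 1] with n hn
    have hn0 : (0:ℝ) < Real.sqrt n := Real.sqrt_pos.mpr (by exact_mod_cast hn)
    rw [Pi.inv_apply]
    field_simp
  -- the stopping set is nonempty for every ε > 0
  have hne : ∀ ε : ℝ, 0 < ε →
      {n : ℕ | 1 ≤ n ∧ V n ω ≤ ε * lamHat n ω}.Nonempty := by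
    intro ε hε
    have hεlam : Tendsto (fun n => ε * lamHat n ω - V n ω) atTop (nhds (ε * lam - 0)) :=
      (tendsto_const_nhds.mul h2).sub hV0
    have hpos : ∀ᶠ n in atTop, 0 < ε * lamHat n ω - V n ω :=
      hεlam.eventually (eventually_gt_nhds (by simp; positivity))
    obtain ⟨n, hn1, hn2⟩ := (hpos.and (eventually_ge_atTop 1)).exists
    exact ⟨n, hn2, by linarith⟩
  have hTmem : ∀ ε : ℝ, 0 < ε →
      1 ≤ T ε ω ∧ V (T ε ω) ω ≤ ε * lamHat (T ε ω) ω := by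
    intro ε hε
    rw [hT]
    exact Nat.sInf_mem (hne ε hε)
  -- T ε ω → ∞ as ε → 0+
  have hTlarge : ∀ N : ℕ, ∃ ε₀ > 0, ∀ ε : ℝ, 0 < ε → ε < ε₀ → N < T ε ω := by
    intro N
    have key : ∃ ε₀ > 0, ∀ n ∈ Finset.Icc 1 N, ε₀ * (|lamHat n ω| + 1) ≤ V n ω := by
      rcases (Finset.Icc 1 N).eq_empty_or_nonempty with h | h
      · exact ⟨1, one_pos, by simp [h]⟩
      · obtain ⟨n0, hn0, hmin⟩ :=
          (Finset.Icc 1 N).exists_min_image (fun n => V n ω / (|lamHat n ω| + 1)) h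
        refine ⟨V n0 ω / (|lamHat n0 ω| + 1), div_pos (hVpos n0 ω) (by positivity), fun n hn => ?_⟩
        have hd : (0:ℝ) < |lamHat n ω| + 1 := by positivity
        have h1' := hmin n hn
        have h2' := mul_le_mul_of_nonneg_right h1' hd.le
        rwa [div_mul_cancel₀ _ hd.ne'] at h2'
    obtain ⟨ε₀, hε₀, hkey⟩ := key
    refine ⟨ε₀, hε₀, fun ε hε hεlt => ?_⟩
    by_contra hcon
    push_neg at hcon
    obtain ⟨h1T, h2T⟩ := hTmem ε hε
    have hIcc : T ε ω ∈ Finset.Icc 1 N := Finset.mem_Icc.mpr ⟨h1T, hcon⟩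
    have hk := hkey _ hIcc
    have habs := le_abs_self (lamHat (T ε ω) ω)
    have hb : ε * lamHat (T ε ω) ω < ε₀ * (|lamHat (T ε ω) ω| + 1) := by
      calc ε * lamHat (T ε ω) ω ≤ ε * (|lamHat (T ε ω) ω| + 1) :=
            mul_le_mul_of_nonneg_left (by linarith) hε.le
        _ < ε₀ * (|lamHat (T ε ω) ω| + 1) :=
            mul_lt_mul_of_pos_right hεlt (by positivity)
    linarith
  -- the two comparison sequences
  have hf : Tendsto (fun n : ℕ => Real.sqrt n * V n ω / lamHat n ω) atTop
      (nhds (c / lam)) := h1.div h2 hlam.ne'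
  have hlampos : ∀ᶠ n in atTop, 0 < lamHat n ω := h2.eventually (eventually_gt_nhds hlam)
  have hratio : Tendsto (fun n : ℕ => Real.sqrt ((n:ℝ) + 1) / Real.sqrt n) atTop (nhds 1) := by
    have h5 : Tendsto (fun n : ℕ => 1 + (n:ℝ)⁻¹) atTop (nhds (1 + 0)) :=
      tendsto_const_nhds.add (tendsto_inv_atTop_zero.comp tendsto_natCast_atTop_atTop)
    rw [add_zero] at h5
    have h4 : Tendsto (fun n : ℕ => ((n:ℝ) + 1) / n) atTop (nhds 1) := by
      refine h5.congr' ?_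
      filter_upwards [eventually_ge_atTop 1] with n hn
      have hn0 : (0:ℝ) < (n:ℝ) := by exact_mod_cast hn
      field_simp
    have h6 := (Real.continuous_sqrt.tendsto 1).comp h4
    rw [Real.sqrt_one] at h6
    refine h6.congr' ?_
    filter_upwards with n
    simp only [Function.comp]
    rw [Real.sqrt_div (by positivity)]
  have hg : Tendsto (fun n : ℕ => Real.sqrt ((n:ℝ) + 1) * V n ω / lamHat n ω) atTop
      (nhds (c / lam)) := by
    have h7 := hf.mul hratio
    rw [mul_one] at h7
    refine h7.congr' ?_
    filter_upwards [eventually_ge_atTop 1, hlampos] with n hn hln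
    have hn0 : (0:ℝ) < Real.sqrt n := Real.sqrt_pos.mpr (by exact_mod_cast hn)
    field_simp
  -- main estimate
  rw [Metric.tendsto_nhdsWithin_nhds]
  intro δ hδ
  have hev2 : ∀ᶠ (n : ℕ) in atTop, |Real.sqrt n * V n ω / lamHat n ω - c / lam| < δ := by
    have := Metric.tendsto_nhds.mp hf δ hδ
    simpa [Real.dist_eq] using this
  have hev3 : ∀ᶠ (n : ℕ) in atTop, |Real.sqrt ((n:ℝ) + 1) * V n ω / lamHat n ω - c / lam| < δ := by
    have := Metric.tendsto_nhds.mp hg δ hδ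
    simpa [Real.dist_eq] using this
  obtain ⟨N, hN⟩ := eventually_atTop.mp ((hlampos.and hev2).and hev3)
  obtain ⟨ε₀, hε₀, hε₀T⟩ := hTlarge (N + 1)
  refine ⟨ε₀, hε₀, fun ε hε hdist => ?_⟩
  have hε' : 0 < ε := hε
  have hεlt : ε < ε₀ := by rwa [Real.dist_eq, sub_zero, abs_of_pos hε'] at hdist
  set t := T ε ω with ht_def
  have htN : N + 1 < t := hε₀T ε hε' hεlt
  set m := t - 1 with hm_def
  have hmt : m + 1 = t := by omega
  have hcast : (t:ℝ) = (m:ℝ) + 1 := by rw [← hmt]; push_cast; ring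
  obtain ⟨⟨hlt, hft⟩, -⟩ := hN t (by omega)
  obtain ⟨⟨hlm, -⟩, hgm⟩ := hN m (by omega)
  obtain ⟨h1t, hVt⟩ := hTmem ε hε'
  have hnot : ¬ (V m ω ≤ ε * lamHat m ω) := by
    intro hcon
    have hle := Nat.sInf_le (show m ∈ {n : ℕ | 1 ≤ n ∧ V n ω ≤ ε * lamHat n ω} from
      ⟨by omega, hcon⟩)
    rw [← hT ε ω] at hle
    omega
  push_neg at hnot
  -- lower bound
  have h8 : Real.sqrt t * V t ω / lamHat t ω ≤ ε * Real.sqrt t := by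
    rw [div_le_iff₀ hlt]
    calc Real.sqrt t * V t ω ≤ Real.sqrt t * (ε * lamHat t ω) :=
          mul_le_mul_of_nonneg_left hVt (Real.sqrt_nonneg _)
      _ = ε * Real.sqrt t * lamHat t ω := by ring
  -- upper bound
  have hsqpos : 0 < Real.sqrt ((m:ℝ) + 1) := Real.sqrt_pos.mpr (by positivity)
  have h9 : ε < V m ω / lamHat m ω := (lt_div_iff₀ hlm).mpr hnot
  have h10 : ε * Real.sqrt ((m:ℝ) + 1) < Real.sqrt ((m:ℝ) + 1) * V m ω / lamHat m ω := by
    rw [mul_div_assoc, mul_comm ε]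
    exact mul_lt_mul_of_pos_left h9 hsqpos
  rw [hcast] at h8 ⊢
  have hal := abs_lt.mp hft
  have hgm' := abs_lt.mp hgm
  rw [Real.dist_eq, abs_lt]
  rw [hcast] at hft
  have hal' := abs_lt.mp hft
  constructor <;> linarith
end

section
/- Let $(a_n)$ be a sequence of positive reals with $\sqrt{n}\, a_n \to c$ for some $c > 0$, let $(b_n)$ be positive reals with $b_n \to \lambda > 0$, and for $\epsilon > 0$ define $T(\epsilon) = \inf\{n \geq 1 : a_n \leq \epsilon b_n\}$. Then $T(\epsilon) < \infty$ for every $\epsilon > 0$, $T(\epsilon) \to \infty$ as $\epsilon \to 0$, and $\epsilon \sqrt{T(\epsilon)} \to c/\lambda$ as $\epsilon \to 0$. -/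
open Filter Set

private lemma sqrt_tendsto_atTop' : Tendsto Real.sqrt atTop atTop := by
  rw [tendsto_atTop]
  intro M
  filter_upwards [eventually_ge_atTop ((max M 0) ^ 2)] with x hx
  have h0 : 0 ≤ max M 0 := le_max_right _ _
  calc M ≤ max M 0 := le_max_left _ _
    _ = Real.sqrt ((max M 0) ^ 2) := (Real.sqrt_sq h0).symm
    _ ≤ Real.sqrt x := Real.sqrt_le_sqrt hx

theorem deterministic_relative_stopping_rule
    (a b : ℕ → ℝ) (c lam : ℝ) (hc : 0 < c) (hlam : 0 < lam)
    (ha : ∀ n, 0 < a n) (hb : ∀ n, 0 < b n)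
    (hconva : Tendsto (fun n : ℕ => Real.sqrt n * a n) atTop (nhds c))
    (hconvb : Tendsto b atTop (nhds lam))
    (T : ℝ → ℕ) (hT : ∀ ε, T ε = sInf {n : ℕ | 1 ≤ n ∧ a n ≤ ε * b n}) :
    (∀ ε > (0:ℝ), {n : ℕ | 1 ≤ n ∧ a n ≤ ε * b n}.Nonempty) ∧
    Tendsto T (nhdsWithin 0 (Set.Ioi 0)) atTop ∧
    Tendsto (fun ε => ε * Real.sqrt (T ε)) (nhdsWithin 0 (Set.Ioi 0)) (nhds (c / lam)) := by
  set l := nhdsWithin (0:ℝ) (Set.Ioi 0) with hl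
  -- sqrt n → ∞
  have hsq : Tendsto (fun n : ℕ => Real.sqrt n) atTop atTop :=
    sqrt_tendsto_atTop'.comp tendsto_natCast_atTop_atTop
  -- a → 0
  have ha0 : Tendsto a atTop (nhds 0) := by
    have h1 : Tendsto (fun n : ℕ => Real.sqrt n * a n * (Real.sqrt n)⁻¹) atTop
        (nhds (c * 0)) := hconva.mul hsq.inv_tendsto_atTop
    rw [mul_zero] at h1
    apply h1.congr'
    filter_upwards [eventually_ge_atTop 1] with n hn
    have hs : Real.sqrt n ≠ 0 := by
      have : (0:ℝ) < n := by exact_mod_cast hn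
      positivity
    field_simp
  -- Part 1: nonemptiness
  have hne : ∀ ε > (0:ℝ), {n : ℕ | 1 ≤ n ∧ a n ≤ ε * b n}.Nonempty := by
    intro ε hε
    have hev1 : ∀ᶠ n in atTop, a n < ε * (lam / 2) :=
      ha0.eventually (eventually_lt_nhds (by positivity))
    have hev2 : ∀ᶠ n in atTop, lam / 2 < b n :=
      hconvb.eventually (eventually_gt_nhds (by linarith))
    obtain ⟨n, ⟨h1, h2⟩, h3⟩ := ((hev1.and hev2).and (eventually_ge_atTop 1)).exists
    exact ⟨n, h3, le_of_lt (h1.trans_le (by nlinarith))⟩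
  have hmem : ∀ ε > (0:ℝ), 1 ≤ T ε ∧ a (T ε) ≤ ε * b (T ε) := by
    intro ε hε
    have := Nat.sInf_mem (hne ε hε)
    rw [← hT ε] at this
    exact this
  -- Part 2: T → ∞
  have hTtop : Tendsto T l atTop := by
    rw [tendsto_atTop]
    intro N
    rcases le_or_gt N 1 with hN | hN
    · filter_upwards [self_mem_nhdsWithin] with ε hε
      exact hN.trans (hmem ε hε).1
    · have hFne : (Finset.Ico 1 N).Nonempty := ⟨1, by simp [hN]⟩
      set δ := (Finset.Ico 1 N).inf' hFne (fun n => a n / b n) with hδ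
      have hδpos : 0 < δ := by
        rw [hδ, Finset.lt_inf'_iff]
        intro n _
        exact div_pos (ha n) (hb n)
      have hIoo : Set.Ioo (0:ℝ) δ ∈ l :=
        Ioo_mem_nhdsGT_of_mem ⟨le_refl _, hδpos⟩
      filter_upwards [hIoo] with ε hε
      by_contra hcon
      push_neg at hcon
      obtain ⟨h1, h2⟩ := hmem ε hε.1
      have hmemF : T ε ∈ Finset.Ico 1 N := Finset.mem_Ico.mpr ⟨h1, hcon⟩
      have hle : δ ≤ a (T ε) / b (T ε) := Finset.inf'_le _ hmemF
      have hεlt : ε < a (T ε) / b (T ε) := lt_of_lt_of_le hε.2 hle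
      have : ε * b (T ε) < a (T ε) := (lt_div_iff₀ (hb (T ε))).mp hεlt
      linarith
  -- Part 3
  refine ⟨hne, hTtop, ?_⟩
  set g : ℕ → ℝ := fun n => Real.sqrt n * a n / b n with hg
  have hgten : Tendsto g atTop (nhds (c / lam)) := hconva.div hconvb hlam.ne'
  have hlow : Tendsto (fun ε => g (T ε)) l (nhds (c / lam)) := hgten.comp hTtop
  have hsub : Tendsto (fun ε => T ε - 1) l atTop := (tendsto_sub_atTop_nat 1).comp hTtop
  have hid : Tendsto (fun ε : ℝ => ε) l (nhds 0) := tendsto_id.mono_left nhdsWithin_le_nhds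
  have hupp : Tendsto (fun ε => g (T ε - 1) + ε) l (nhds (c / lam)) := by
    have := (hgten.comp hsub).add hid
    rwa [add_zero] at this
  apply tendsto_of_tendsto_of_tendsto_of_le_of_le' hlow hupp
  · -- lower bound: g (T ε) ≤ ε * √(T ε)
    filter_upwards [self_mem_nhdsWithin] with ε hε
    obtain ⟨h1, h2⟩ := hmem ε hε
    have hbp := hb (T ε)
    have hsn : 0 ≤ Real.sqrt (T ε) := Real.sqrt_nonneg _
    rw [hg]
    rw [div_le_iff₀ hbp]
    calc Real.sqrt (T ε) * a (T ε) ≤ Real.sqrt (T ε) * (ε * b (T ε)) :=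
          mul_le_mul_of_nonneg_left h2 hsn
      _ = ε * Real.sqrt (T ε) * b (T ε) := by ring
  · -- upper bound: ε * √(T ε) ≤ g (T ε - 1) + ε
    filter_upwards [self_mem_nhdsWithin, hTtop.eventually (eventually_ge_atTop 2)]
      with ε hε hT2
    set m := T ε with hm
    have hnot : m - 1 ∉ {n : ℕ | 1 ≤ n ∧ a n ≤ ε * b n} := by
      apply Nat.notMem_of_lt_sInf
      rw [← hT ε, ← hm]
      omega
    have h11 : 1 ≤ m - 1 := by omega
    have hgt : ε * b (m - 1) < a (m - 1) := by
      by_contra hcc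
      push_neg at hcc
      exact hnot ⟨h11, hcc⟩
    have hεlt : ε < a (m - 1) / b (m - 1) := (lt_div_iff₀ (hb (m - 1))).mpr hgt
    have hcast : ((m - 1 : ℕ) : ℝ) = (m : ℝ) - 1 := by
      have : (1:ℕ) ≤ m := by omega
      push_cast [Nat.cast_sub this]
      ring
    set s := Real.sqrt ((m - 1 : ℕ) : ℝ) with hs
    have hs0 : 0 ≤ s := Real.sqrt_nonneg _
    have hm1 : (0:ℝ) ≤ (m : ℝ) - 1 := by
      have h1m : (1:ℕ) ≤ m := by omega
      have : (1:ℝ) ≤ (m:ℝ) := by exact_mod_cast h1m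
      linarith
    have hsq2 : s ^ 2 = (m : ℝ) - 1 := by
      rw [hs, hcast, Real.sq_sqrt hm1]
    have hkey : Real.sqrt m ≤ s + 1 := by
      have h1 : (m : ℝ) ≤ (s + 1) ^ 2 := by nlinarith
      calc Real.sqrt m ≤ Real.sqrt ((s + 1) ^ 2) := Real.sqrt_le_sqrt h1
        _ = s + 1 := Real.sqrt_sq (by linarith)
    have hεs : ε * s ≤ g (m - 1) := by
      rw [hg]
      calc ε * s ≤ (a (m - 1) / b (m - 1)) * s :=
            mul_le_mul_of_nonneg_right hεlt.le hs0
        _ = Real.sqrt ((m - 1 : ℕ) : ℝ) * a (m - 1) / b (m - 1) := by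
            rw [← hs]; ring
    calc ε * Real.sqrt m ≤ ε * (s + 1) := mul_le_mul_of_nonneg_left hkey hε.le
      _ = ε * s + ε := by ring
      _ ≤ g (m - 1) + ε := by linarith
end

section
/- Let $(a_n)$ be a nonincreasing sequence of positive reals, $(\theta_n)$ real numbers with $\theta_n \to \theta$ where $|\theta| > 0$, and suppose $\sqrt{n}\, a_n \to c > 0$. Define $T(\epsilon) = \inf\{n \geq 1 : a_n \leq \epsilon |\theta_n|\}$ for $\epsilon > 0$. Then $T(\epsilon)$ is finite for every $\epsilon > 0$ and $\epsilon \sqrt{T(\epsilon)} \to c/|\theta|$ as $\epsilon \to 0$. -/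
open Filter Set

theorem relative_magnitude_stopping_rule
    (a : ℕ → ℝ) (θseq : ℕ → ℝ) (θ c : ℝ) (hc : 0 < c) (hθ : 0 < |θ|)
    (ha : ∀ n, 0 < a n) (hmono : Antitone a)
    (hconva : Tendsto (fun n : ℕ => Real.sqrt n * a n) atTop (nhds c))
    (hθconv : Tendsto θseq atTop (nhds θ))
    (T : ℝ → ℕ) (hT : ∀ ε, T ε = sInf {n : ℕ | 1 ≤ n ∧ a n ≤ ε * |θseq n|}) :
    (∀ ε > (0:ℝ), {n : ℕ | 1 ≤ n ∧ a n ≤ ε * |θseq n|}.Nonempty) ∧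
    Tendsto (fun ε => ε * Real.sqrt (T ε)) (nhdsWithin 0 (Set.Ioi 0)) (nhds (c / |θ|)) := by
  have habs : Tendsto (fun n => |θseq n|) atTop (nhds |θ|) := hθconv.abs
  -- (√n)⁻¹ → 0
  have hinv : Tendsto (fun n : ℕ => (Real.sqrt n)⁻¹) atTop (nhds 0) := by
    have h1 : Tendsto (fun n : ℕ => ((n : ℝ))⁻¹) atTop (nhds 0) :=
      tendsto_inv_atTop_zero.comp tendsto_natCast_atTop_atTop
    have h2 := h1.sqrt
    simpa [Real.sqrt_inv] using h2
  -- a → 0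
  have ha0 : Tendsto a atTop (nhds 0) := by
    have h1 : Tendsto (fun n : ℕ => (Real.sqrt n * a n) * (Real.sqrt n)⁻¹) atTop
        (nhds (c * 0)) := hconva.mul hinv
    rw [mul_zero] at h1
    refine Tendsto.congr' ?_ h1
    filter_upwards [eventually_ge_atTop 1] with n hn
    have hs : Real.sqrt n ≠ 0 := by
      have : (0:ℝ) < n := by exact_mod_cast hn
      positivity
    field_simp
  -- nonemptiness
  have hne : ∀ ε > (0:ℝ), {n : ℕ | 1 ≤ n ∧ a n ≤ ε * |θseq n|}.Nonempty := by
    intro ε hε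
    have h1 : ∀ᶠ n in atTop, |θ| / 2 < |θseq n| :=
      habs.eventually_const_lt (by linarith)
    have h2 : ∀ᶠ n in atTop, a n < ε * (|θ| / 2) :=
      ha0.eventually_lt_const (by positivity)
    obtain ⟨n, hn⟩ := ((h1.and h2).and (eventually_ge_atTop 1)).exists
    exact ⟨n, hn.2, le_trans hn.1.2.le
      (mul_le_mul_of_nonneg_left hn.1.1.le hε.le)⟩
  -- T tends to atTop as ε → 0⁺
  have hTtop : Tendsto T (nhdsWithin (0:ℝ) (Set.Ioi 0)) atTop := by
    rw [tendsto_atTop]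
    intro N
    have hall : ∀ᶠ ε in nhdsWithin (0:ℝ) (Set.Ioi 0),
        ∀ n ∈ Finset.range (N + 1), ε * |θseq n| < a n := by
      rw [eventually_all_finset]
      intro n _
      have ht : Tendsto (fun ε : ℝ => ε * |θseq n|) (nhdsWithin (0:ℝ) (Set.Ioi 0))
          (nhds (0 * |θseq n|)) :=
        (tendsto_id.mul tendsto_const_nhds).mono_left nhdsWithin_le_nhds
      rw [zero_mul] at ht
      exact ht.eventually_lt_const (ha n)
    filter_upwards [hall, self_mem_nhdsWithin] with ε hε hεpos
    have hmem := Nat.sInf_mem (hne ε hεpos)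
    rw [← hT ε] at hmem
    by_contra h
    push_neg at h
    have := hε (T ε) (Finset.mem_range.mpr (by omega))
    have := hmem.2
    linarith
  -- g := √n * a n / |θseq n| → c/|θ|
  have hg : Tendsto (fun n : ℕ => Real.sqrt n * a n / |θseq n|) atTop
      (nhds (c / |θ|)) := hconva.div habs (ne_of_gt hθ)
  -- √(n+1)/√n → 1
  have hratio : Tendsto (fun n : ℕ => Real.sqrt ((n : ℝ) + 1) / Real.sqrt n) atTop
      (nhds 1) := by
    have h1 : Tendsto (fun n : ℕ => ((n : ℝ) + 1) / n) atTop (nhds 1) := by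
      have h2 : Tendsto (fun n : ℕ => 1 + 1 / (n : ℝ)) atTop (nhds (1 + 0)) :=
        tendsto_const_nhds.add tendsto_one_div_atTop_nhds_zero_nat
      rw [add_zero] at h2
      refine Tendsto.congr' ?_ h2
      filter_upwards [eventually_ge_atTop 1] with n hn
      have : (n : ℝ) ≠ 0 := by positivity
      field_simp
    have h3 := h1.sqrt
    rw [Real.sqrt_one] at h3
    refine Tendsto.congr' ?_ h3
    filter_upwards [eventually_ge_atTop 1] with n hn
    rw [Real.sqrt_div (by positivity)]
  -- √(n+1) * a n → c
  have hconva' : Tendsto (fun n : ℕ => Real.sqrt ((n : ℝ) + 1) * a n) atTop (nhds c) := by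
    have h1 := hratio.mul hconva
    rw [one_mul] at h1
    refine Tendsto.congr' ?_ h1
    filter_upwards [eventually_ge_atTop 1] with n hn
    have hs : Real.sqrt n ≠ 0 := by
      have : (0:ℝ) < n := by exact_mod_cast hn
      positivity
    field_simp
  have hH : Tendsto (fun n : ℕ => Real.sqrt ((n : ℝ) + 1) * a n / |θseq n|) atTop
      (nhds (c / |θ|)) := hconva'.div habs (ne_of_gt hθ)
  -- choose N1 with |θseq n| > 0 for n ≥ N1
  obtain ⟨N1, hN1⟩ := eventually_atTop.mp (habs.eventually_const_lt
    (by linarith : |θ| / 2 < |θ|))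
  have hθpos : ∀ n ≥ N1, 0 < |θseq n| := fun n hn => lt_trans (by positivity) (hN1 n hn)
  -- composed limits
  have hlow : Tendsto (fun ε => Real.sqrt (T ε) * a (T ε) / |θseq (T ε)|)
      (nhdsWithin (0:ℝ) (Set.Ioi 0)) (nhds (c / |θ|)) := hg.comp hTtop
  have hTtop' : Tendsto (fun ε => T ε - 1) (nhdsWithin (0:ℝ) (Set.Ioi 0)) atTop := by
    rw [tendsto_atTop]
    intro N
    filter_upwards [tendsto_atTop.mp hTtop (N + 1)] with ε hε
    omega
  have hup : Tendsto (fun ε => Real.sqrt (((T ε - 1 : ℕ) : ℝ) + 1) * a (T ε - 1) /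
      |θseq (T ε - 1)|) (nhdsWithin (0:ℝ) (Set.Ioi 0)) (nhds (c / |θ|)) :=
    hH.comp hTtop'
  -- key eventual bounds
  have key : ∀ᶠ ε in nhdsWithin (0:ℝ) (Set.Ioi 0),
      Real.sqrt (T ε) * a (T ε) / |θseq (T ε)| ≤ ε * Real.sqrt (T ε) ∧
      ε * Real.sqrt (T ε) ≤ Real.sqrt (((T ε - 1 : ℕ) : ℝ) + 1) * a (T ε - 1) /
        |θseq (T ε - 1)| := by
    filter_upwards [self_mem_nhdsWithin, tendsto_atTop.mp hTtop (N1 + 2)] with ε hε hTε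
    have hεpos : (0:ℝ) < ε := hε
    have hmem := Nat.sInf_mem (hne ε hεpos)
    rw [← hT ε] at hmem
    set m := T ε with hm
    have hθm : 0 < |θseq m| := hθpos m (by omega)
    have hθm1 : 0 < |θseq (m - 1)| := hθpos (m - 1) (by omega)
    have hsm : (0:ℝ) ≤ Real.sqrt m := Real.sqrt_nonneg _
    constructor
    · rw [div_le_iff₀ hθm]
      have h2 := hmem.2
      nlinarith
    · -- m - 1 is not in the set
      have hnot : ¬ (1 ≤ m - 1 ∧ a (m - 1) ≤ ε * |θseq (m - 1)|) := by
        intro hmem1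
        have h3 : sInf {n : ℕ | 1 ≤ n ∧ a n ≤ ε * |θseq n|} ≤ m - 1 :=
          Nat.sInf_le hmem1
        rw [← hT ε] at h3
        omega
      push_neg at hnot
      have hlt : ε * |θseq (m - 1)| < a (m - 1) := hnot (by omega)
      have hεlt : ε < a (m - 1) / |θseq (m - 1)| := by
        rw [lt_div_iff₀ hθm1]; linarith
      have hcast : ((m - 1 : ℕ) : ℝ) + 1 = (m : ℝ) := by
        have : 1 ≤ m := by omega
        push_cast [Nat.cast_sub this]
        ring
      rw [hcast]
      calc ε * Real.sqrt m ≤ (a (m - 1) / |θseq (m - 1)|) * Real.sqrt m :=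
            mul_le_mul_of_nonneg_right hεlt.le hsm
        _ = Real.sqrt m * a (m - 1) / |θseq (m - 1)| := by ring
  exact ⟨hne, tendsto_of_tendsto_of_tendsto_of_le_of_le' hlow hup
    (key.mono fun ε h => h.1) (key.mono fun ε h => h.2)⟩
end
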